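/- Let $d\geq 3$, $1\leq k\leq d-1$, $r_2=\left(\frac{d-k}{d}\right)^{1/k}$, and for $r_0>r_2$ define $\mu(r_0)=r_0^2\Big[-\frac12+\int_1^\infty \tau\big((1+(r_0^{-k}-1)\tau^{-d})^{1/k}-1\big)d\tau\Big]$. Then $\mu$ is strictly decreasing on $(r_2,\infty)$, $\mu(r_0)\to-\infty$ as $r_0\to\infty$, and hence $\mu(r_0)<\mu(r_2)=\left(\frac{d-k}{d}\right)^{2/k}\Big[-\frac12+\int_1^\infty\tau\big((1+\frac{k}{d-k}\tau^{-d})^{1/k}-1\big)d\tau\Big]$ for all $r_0>r_2$. -/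

import Mathlib

open MeasureTheory Set

-- |(1+x)^p - 1| ≤ |x| for x > -1, 0 < p ≤ 1
lemma aux_abs_rpow_sub_one {x p : ℝ} (hx : -1 < x) (hp0 : 0 < p) (hp1 : p ≤ 1) :
    |(1+x)^p - 1| ≤ |x| := by
  have h1 : (0:ℝ) < 1 + x := by linarith
  rcases le_or_gt 0 x with h | h
  · have hb : (1:ℝ) ≤ 1 + x := by linarith
    have h2 : (1+x)^p ≤ (1+x)^(1:ℝ) := Real.rpow_le_rpow_of_exponent_le hb hp1
    have h3 : (1:ℝ) ≤ (1+x)^p := Real.one_le_rpow hb hp0.le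
    rw [Real.rpow_one] at h2
    rw [abs_of_nonneg (by linarith), abs_of_nonneg h]
    linarith
  · have hb : (1+x) ≤ 1 := by linarith
    have h2 : (1+x)^(1:ℝ) ≤ (1+x)^p := Real.rpow_le_rpow_of_exponent_ge h1 hb hp1
    have h3 : (1+x)^p ≤ 1 := Real.rpow_le_one h1.le hb hp0.le
    rw [Real.rpow_one] at h2
    rw [abs_of_nonpos (by linarith), abs_of_neg h]
    linarith

noncomputable def Bf (d k : ℕ) (r τ : ℝ) : ℝ := 1 + ((r^k)⁻¹ - 1) * τ ^ (-(d:ℝ))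
noncomputable def Gf (d k : ℕ) (r τ : ℝ) : ℝ := (Bf d k r τ) ^ ((1:ℝ)/k)
noncomputable def Ff (d k : ℕ) (r τ : ℝ) : ℝ := τ * (Gf d k r τ - 1)
noncomputable def If (d k : ℕ) (r : ℝ) : ℝ := ∫ τ in Set.Ioi (1:ℝ), Ff d k r τ
noncomputable def Jf (d k : ℕ) (r : ℝ) : ℝ :=
  ∫ τ in Set.Ioi (1:ℝ), τ ^ (1-(d:ℝ)) * (Bf d k r τ) ^ ((1:ℝ)/k - 1)
lemma Bf_ge (d k : ℕ) {r τ : ℝ} (hr : 0 < r) (hτ : 1 ≤ τ) :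
    min 1 ((r^k)⁻¹) ≤ Bf d k r τ := by
  have hτ0 : (0:ℝ) < τ := lt_of_lt_of_le one_pos hτ
  have h1 : (0:ℝ) < τ ^ (-(d:ℝ)) := Real.rpow_pos_of_pos hτ0 _
  have h2 : τ ^ (-(d:ℝ)) ≤ 1 := Real.rpow_le_one_of_one_le_of_nonpos hτ (by simp)
  have hrk : (0:ℝ) < (r^k)⁻¹ := by positivity
  rcases le_or_gt 0 ((r^k)⁻¹ - 1) with h | h
  · have : 0 ≤ ((r^k)⁻¹ - 1) * τ ^ (-(d:ℝ)) := mul_nonneg h h1.le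
    calc min 1 ((r^k)⁻¹) ≤ 1 := min_le_left _ _
      _ ≤ Bf d k r τ := by unfold Bf; linarith
  · have : ((r^k)⁻¹ - 1) ≤ ((r^k)⁻¹ - 1) * τ ^ (-(d:ℝ)) := by
      nlinarith
    calc min 1 ((r^k)⁻¹) ≤ (r^k)⁻¹ := min_le_right _ _
      _ ≤ Bf d k r τ := by unfold Bf; linarith

lemma Bf_pos (d k : ℕ) {r τ : ℝ} (hr : 0 < r) (hτ : 1 ≤ τ) : 0 < Bf d k r τ :=
  lt_of_lt_of_le (by positivity) (Bf_ge d k hr hτ)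

lemma Bf_le (d k : ℕ) {r τ : ℝ} (hr : 0 < r) (hτ : 1 ≤ τ) :
    Bf d k r τ ≤ max 1 ((r^k)⁻¹) := by
  have hτ0 : (0:ℝ) < τ := lt_of_lt_of_le one_pos hτ
  have h1 : (0:ℝ) < τ ^ (-(d:ℝ)) := Real.rpow_pos_of_pos hτ0 _
  have h2 : τ ^ (-(d:ℝ)) ≤ 1 := Real.rpow_le_one_of_one_le_of_nonpos hτ (by simp)
  rcases le_or_gt 0 ((r^k)⁻¹ - 1) with h | h
  · have : ((r^k)⁻¹ - 1) * τ ^ (-(d:ℝ)) ≤ ((r^k)⁻¹ - 1) := by nlinarith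
    calc Bf d k r τ ≤ (r^k)⁻¹ := by unfold Bf; linarith
      _ ≤ _ := le_max_right _ _
  · have : ((r^k)⁻¹ - 1) * τ ^ (-(d:ℝ)) ≤ 0 := mul_nonpos_of_nonpos_of_nonneg h.le h1.le
    calc Bf d k r τ ≤ 1 := by unfold Bf; linarith
      _ ≤ _ := le_max_left _ _
lemma contOn_Bf (d k : ℕ) (r : ℝ) : ContinuousOn (Bf d k r) (Ioi 1) := by
  apply continuousOn_const.add (continuousOn_const.mul ?_)
  exact fun τ hτ => (Real.continuousAt_rpow_const τ _ (Or.inl (by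
    have : (1:ℝ) < τ := hτ; positivity))).continuousWithinAt

lemma contOn_Bf_rpow (d k : ℕ) {r : ℝ} (hr : 0 < r) (q : ℝ)
    (hpos : ∀ τ : ℝ, 1 ≤ τ → 0 < Bf d k r τ) :
    ContinuousOn (fun τ => (Bf d k r τ) ^ q) (Ioi 1) := by
  exact (contOn_Bf d k r).rpow_const (fun τ hτ => Or.inl (ne_of_gt (hpos τ (le_of_lt hτ))))


lemma p_mem (k : ℕ) (hk : 1 ≤ k) : 0 < (1:ℝ)/k ∧ (1:ℝ)/k ≤ 1 := by
  have : (1:ℝ) ≤ k := by exact_mod_cast hk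
  constructor
  · positivity
  · rw [div_le_one (by linarith)]; exact this

lemma integrable_rpow_mul (d : ℕ) (hd : 3 ≤ d) (C : ℝ) :
    IntegrableOn (fun τ : ℝ => C * τ ^ (1-(d:ℝ))) (Ioi 1) := by
  have hD : (3:ℝ) ≤ d := by exact_mod_cast hd
  exact (integrableOn_Ioi_rpow_of_lt (by linarith) one_pos).const_mul C

lemma Gf_sub_one_abs (d k : ℕ) (hk : 1 ≤ k) {r τ : ℝ} (hr : 0 < r) (hτ : 1 ≤ τ) :
    |Gf d k r τ - 1| ≤ |(r^k)⁻¹ - 1| * τ ^ (-(d:ℝ)) := by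
  have hτ0 : (0:ℝ) < τ := lt_of_lt_of_le one_pos hτ
  have hB := Bf_pos d k hr hτ
  have hx : -1 < ((r^k)⁻¹ - 1) * τ ^ (-(d:ℝ)) := by
    have : Bf d k r τ = 1 + ((r^k)⁻¹ - 1) * τ ^ (-(d:ℝ)) := rfl
    linarith [hB.trans_eq this]
  have := aux_abs_rpow_sub_one hx (p_mem k hk).1 (p_mem k hk).2
  calc |Gf d k r τ - 1| ≤ |((r^k)⁻¹ - 1) * τ ^ (-(d:ℝ))| := this
    _ = |(r^k)⁻¹ - 1| * τ ^ (-(d:ℝ)) := by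
        rw [abs_mul, abs_of_nonneg (Real.rpow_nonneg hτ0.le _)]

lemma Ff_abs_le (d k : ℕ) (hk : 1 ≤ k) {r τ : ℝ} (hr : 0 < r) (hτ : 1 ≤ τ) :
    ‖Ff d k r τ‖ ≤ |(r^k)⁻¹ - 1| * τ ^ (1-(d:ℝ)) := by
  have hτ0 : (0:ℝ) < τ := lt_of_lt_of_le one_pos hτ
  have h := Gf_sub_one_abs d k hk hr hτ
  have hsp : τ ^ (1-(d:ℝ)) = τ * τ ^ (-(d:ℝ)) := by
    rw [show (1-(d:ℝ)) = 1 + (-(d:ℝ)) by ring, Real.rpow_add hτ0, Real.rpow_one]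
  rw [Real.norm_eq_abs, Ff, abs_mul, abs_of_nonneg hτ0.le, hsp]
  nlinarith [abs_nonneg (Gf d k r τ - 1), Real.rpow_pos_of_pos hτ0 (-(d:ℝ))]

lemma contOn_Ff (d k : ℕ) {r : ℝ} (hr : 0 < r) : ContinuousOn (Ff d k r) (Ioi 1) := by
  apply continuousOn_id.mul (ContinuousOn.sub ?_ continuousOn_const)
  exact contOn_Bf_rpow d k hr _ (fun τ hτ => Bf_pos d k hr hτ)

lemma integrableOn_Ff (d k : ℕ) (hd : 3 ≤ d) (hk : 1 ≤ k) {r : ℝ} (hr : 0 < r) :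
    IntegrableOn (Ff d k r) (Ioi 1) := by
  apply Integrable.mono' (integrable_rpow_mul d hd |(r^k)⁻¹ - 1|)
    ((contOn_Ff d k hr).aestronglyMeasurable measurableSet_Ioi)
  filter_upwards [ae_restrict_mem measurableSet_Ioi] with τ hτ
  exact Ff_abs_le d k hk hr (le_of_lt hτ)

lemma integrableOn_Jint (d k : ℕ) (hd : 3 ≤ d) (hk : 1 ≤ k) {r : ℝ} (hr : 0 < r) (q : ℝ) (hq : q ≤ 0) :
    IntegrableOn (fun τ : ℝ => τ ^ (1-(d:ℝ)) * (Bf d k r τ) ^ q) (Ioi 1) := by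
  have hm : 0 < min 1 ((r^k)⁻¹) := by positivity
  apply Integrable.mono' (integrable_rpow_mul d hd ((min 1 ((r^k)⁻¹)) ^ q))
    (((continuousOn_id.rpow_const (fun τ hτ => Or.inl (by
        have h1 : (1:ℝ) < τ := hτ; simp only [id_eq]; exact ne_of_gt (by linarith)))).mul
      (contOn_Bf_rpow d k hr q (fun τ hτ => Bf_pos d k hr hτ))).aestronglyMeasurable
      measurableSet_Ioi)
  filter_upwards [ae_restrict_mem measurableSet_Ioi] with τ hτ
  have hτ1 : (1:ℝ) < τ := hτ
  have h1 : (Bf d k r τ) ^ q ≤ (min 1 ((r^k)⁻¹)) ^ q :=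
    Real.rpow_le_rpow_of_nonpos hm (Bf_ge d k hr hτ1.le) hq
  have h2 : 0 ≤ (Bf d k r τ) ^ q := (Real.rpow_pos_of_pos (Bf_pos d k hr hτ1.le) q).le
  have h3 : (0:ℝ) < τ ^ (1-(d:ℝ)) := Real.rpow_pos_of_pos (by linarith) _
  simp only [id_eq, Pi.mul_apply]
  rw [norm_mul, Real.norm_of_nonneg h3.le, Real.norm_of_nonneg h2, mul_comm ((min 1 ((r^k)⁻¹)) ^ q)]
  exact mul_le_mul_of_nonneg_left h1 h3.le

noncomputable def cder (k : ℕ) (r : ℝ) : ℝ := -(↑k * r ^ (k - 1)) / (r ^ k) ^ 2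
noncomputable def Fder (d k : ℕ) (r τ : ℝ) : ℝ :=
  τ * (cder k r * τ ^ (-(d:ℝ)) * ((1:ℝ)/k) * (Bf d k r τ) ^ ((1:ℝ)/k - 1))

lemma hasDerivAt_Bf (d k : ℕ) {r : ℝ} (hr : 0 < r) (τ : ℝ) :
    HasDerivAt (fun x => Bf d k x τ) (cder k r * τ ^ (-(d:ℝ))) r := by
  have h1 : HasDerivAt (fun x : ℝ => (x^k)⁻¹) (cder k r) r := by
    have := (hasDerivAt_pow k r).inv (by positivity)
    simpa [cder, Pi.inv_def] using this
  have h2 : HasDerivAt (fun x : ℝ => ((x^k)⁻¹ - 1) * τ ^ (-(d:ℝ)))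
      (cder k r * τ ^ (-(d:ℝ))) r := ((h1.sub_const 1).mul_const _)
  simpa [Bf] using (h2.const_add 1)

lemma hasDerivAt_Ff (d k : ℕ) {r τ : ℝ} (hr : 0 < r) (hτ : 1 ≤ τ) :
    HasDerivAt (fun x => Ff d k x τ) (Fder d k r τ) r := by
  have hB := HasDerivAt.rpow_const (p := (1:ℝ)/k) (hasDerivAt_Bf d k hr τ) (Or.inl (ne_of_gt (Bf_pos d k hr hτ)))
  have := ((hB.sub_const 1).const_mul τ)
  simpa [Ff, Gf, Fder, mul_assoc, mul_comm, mul_left_comm] using this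

noncomputable def Kb (d k : ℕ) (a b : ℝ) : ℝ :=
  (↑k * a ^ (k - 1) / (a ^ k) ^ 2) * ((1:ℝ)/k) * (min 1 ((b^k)⁻¹)) ^ ((1:ℝ)/k - 1)

lemma cder_abs_le (k : ℕ) (hk : 1 ≤ k) {a x : ℝ} (ha : 0 < a) (hax : a ≤ x) :
    |cder k x| ≤ ↑k * a ^ (k - 1) / (a ^ k) ^ 2 := by
  have hx : 0 < x := lt_of_lt_of_le ha hax
  rw [cder, abs_div, abs_neg, abs_of_nonneg (by positivity), abs_of_nonneg (by positivity)]
  rw [div_le_div_iff₀ (by positivity) (by positivity)]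
  have he : (k - 1) + (k + 1) = 2 * k := by omega
  have h1 : a ^ (k + 1) ≤ x ^ (k + 1) := pow_le_pow_left₀ ha.le hax _
  have h2 : x ^ (k - 1) * (a ^ (k-1) * a ^ (k+1)) ≤ x ^ (k-1) * (a ^ (k-1) * x ^ (k+1)) := by
    have := mul_le_mul_of_nonneg_left h1 (le_of_lt (by positivity : (0:ℝ) < a ^ (k-1)))
    exact mul_le_mul_of_nonneg_left this (by positivity)
  calc ↑k * x ^ (k - 1) * (a ^ k) ^ 2 = ↑k * (x ^ (k-1) * (a ^ (k-1) * a ^ (k+1))) := by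
        rw [← pow_add, he, ← pow_mul]; ring
    _ ≤ ↑k * (x ^ (k-1) * (a ^ (k-1) * x ^ (k+1))) := by
        exact mul_le_mul_of_nonneg_left h2 (by positivity)
    _ = ↑k * a ^ (k - 1) * (x ^ k) ^ 2 := by
        rw [show x ^ (k-1) * (a ^ (k-1) * x ^ (k+1)) = a ^ (k-1) * (x ^ (k-1) * x ^ (k+1)) by ring,
          ← pow_add, he, ← pow_mul]; ring

lemma Fder_bound (d k : ℕ) (hk : 1 ≤ k) {a b x τ : ℝ} (ha : 0 < a) (hax : a ≤ x) (hxb : x ≤ b)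
    (hτ : 1 ≤ τ) : ‖Fder d k x τ‖ ≤ Kb d k a b * τ ^ (1-(d:ℝ)) := by
  have hx : 0 < x := lt_of_lt_of_le ha hax
  have hb : 0 < b := lt_of_lt_of_le hx hxb
  have hτ0 : (0:ℝ) < τ := lt_of_lt_of_le one_pos hτ
  have hm : 0 < min 1 ((b^k)⁻¹) := by positivity
  have hmB : min 1 ((b^k)⁻¹) ≤ Bf d k x τ := by
    refine le_trans (min_le_min_left 1 ?_) (Bf_ge d k hx hτ)
    exact inv_anti₀ (by positivity) (pow_le_pow_left₀ hx.le hxb _)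
  have hBp : (Bf d k x τ) ^ ((1:ℝ)/k - 1) ≤ (min 1 ((b^k)⁻¹)) ^ ((1:ℝ)/k - 1) := by
    apply Real.rpow_le_rpow_of_nonpos hm hmB
    have h1 : (1:ℝ)/k ≤ 1 := (p_mem k hk).2
    linarith
  have hc := cder_abs_le k hk ha hax
  have hsp : τ ^ (1-(d:ℝ)) = τ * τ ^ (-(d:ℝ)) := by
    rw [show (1-(d:ℝ)) = 1 + (-(d:ℝ)) by ring, Real.rpow_add hτ0, Real.rpow_one]
  have hτd : (0:ℝ) < τ ^ (-(d:ℝ)) := Real.rpow_pos_of_pos hτ0 _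
  have hBp0 : (0:ℝ) < (Bf d k x τ) ^ ((1:ℝ)/k - 1) :=
    Real.rpow_pos_of_pos (Bf_pos d k hx hτ) _
  have hp : (0:ℝ) < (1:ℝ)/k := (p_mem k hk).1
  rw [Fder, Real.norm_eq_abs, abs_mul, abs_of_nonneg hτ0.le, abs_mul, abs_mul, abs_mul,
    abs_of_nonneg hτd.le, abs_of_nonneg hp.le, abs_of_nonneg hBp0.le, Kb, hsp]
  have hcd0 : 0 ≤ ↑k * a ^ (k - 1) / (a ^ k) ^ 2 := by positivity
  calc τ * (|cder k x| * τ ^ (-(d:ℝ)) * ((1:ℝ)/k) * Bf d k x τ ^ ((1:ℝ)/k - 1))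
      ≤ τ * ((↑k * a ^ (k - 1) / (a ^ k) ^ 2) * τ ^ (-(d:ℝ)) * ((1:ℝ)/k) *
          (min 1 ((b^k)⁻¹)) ^ ((1:ℝ)/k - 1)) := by
        apply mul_le_mul_of_nonneg_left _ hτ0.le
        apply mul_le_mul (mul_le_mul_of_nonneg_right
          (mul_le_mul_of_nonneg_right hc hτd.le) hp.le) hBp hBp0.le
        positivity
    _ = ↑k * a ^ (k - 1) / (a ^ k) ^ 2 * ((1:ℝ)/k) * (min 1 ((b^k)⁻¹)) ^ ((1:ℝ)/k - 1) *
          (τ * τ ^ (-(d:ℝ))) := by ring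

lemma contOn_Fder (d k : ℕ) {r : ℝ} (hr : 0 < r) : ContinuousOn (Fder d k r) (Ioi 1) := by
  unfold Fder
  apply continuousOn_id.mul
  apply ContinuousOn.mul
  · apply ContinuousOn.mul
    · apply continuousOn_const.mul
      exact fun τ hτ => (Real.continuousAt_rpow_const τ _ (Or.inl (by
        have : (1:ℝ) < τ := hτ; exact ne_of_gt (by linarith)))).continuousWithinAt
    · exact continuousOn_const
  · exact contOn_Bf_rpow d k hr _ (fun τ hτ => Bf_pos d k hr hτ)

lemma hasDerivAt_If (d k : ℕ) (hd : 3 ≤ d) (hk : 1 ≤ k) {r : ℝ} (hr : 0 < r) :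
    HasDerivAt (If d k) (cder k r * ((1:ℝ)/k) * Jf d k r) r := by
  have hball : ∀ x ∈ Metric.ball r (r/2), r/2 ≤ x ∧ x ≤ 3*r/2 := by
    intro x hx
    rw [Metric.mem_ball, Real.dist_eq, abs_sub_lt_iff] at hx
    constructor <;> linarith [hx.1, hx.2]
  have key := (hasDerivAt_integral_of_dominated_loc_of_deriv_le (μ := volume.restrict (Ioi 1))
    (F := fun x τ => Ff d k x τ) (F' := fun x τ => Fder d k x τ)
    (bound := fun τ => Kb d k (r/2) (3*r/2) * τ ^ (1-(d:ℝ)))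
    (Metric.ball_mem_nhds r (half_pos hr))
    (Filter.Eventually.mono (isOpen_Ioi.eventually_mem (show r ∈ Ioi (0:ℝ) from hr))
      (fun x hx => ((contOn_Ff d k hx).aestronglyMeasurable measurableSet_Ioi)))
    (integrableOn_Ff d k hd hk hr)
    ((contOn_Fder d k hr).aestronglyMeasurable measurableSet_Ioi)
    ?_ (integrable_rpow_mul d hd _) ?_).2
  · have heq : (∫ τ in Ioi (1:ℝ), Fder d k r τ) = cder k r * ((1:ℝ)/k) * Jf d k r := by
      rw [Jf, ← MeasureTheory.integral_const_mul]
      apply setIntegral_congr_fun measurableSet_Ioi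
      intro τ hτ
      have hτ0 : (0:ℝ) < τ := lt_trans one_pos hτ
      have hsp : τ ^ (1-(d:ℝ)) = τ * τ ^ (-(d:ℝ)) := by
        rw [show (1-(d:ℝ)) = 1 + (-(d:ℝ)) by ring, Real.rpow_add hτ0, Real.rpow_one]
      show Fder d k r τ = cder k r * ((1:ℝ)/k) * (τ ^ (1-(d:ℝ)) * Bf d k r τ ^ ((1:ℝ)/k - 1))
      rw [Fder, hsp]; ring
    exact heq ▸ key
  · filter_upwards [ae_restrict_mem measurableSet_Ioi] with τ hτ x hx
    exact Fder_bound d k hk (half_pos hr) (hball x hx).1 (hball x hx).2 (le_of_lt hτ)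
  · filter_upwards [ae_restrict_mem measurableSet_Ioi] with τ hτ x hx
    exact hasDerivAt_Ff d k (lt_of_lt_of_le (half_pos hr) (hball x hx).1) (le_of_lt hτ)

lemma Gf_at_one (d k : ℕ) (hk : 1 ≤ k) {r : ℝ} (hr : 0 < r) : Gf d k r 1 = r⁻¹ := by
  have hk0 : (k:ℝ) ≠ 0 := by positivity
  have h1 : Bf d k r 1 = (r^k)⁻¹ := by
    rw [Bf, Real.one_rpow]; ring
  rw [Gf, h1, ← Real.rpow_natCast r k, ← Real.rpow_neg hr.le, ← Real.rpow_mul hr.le,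
    show -(k:ℝ) * ((1:ℝ)/k) = -1 by field_simp, Real.rpow_neg_one]

lemma hasDerivAt_Bf_tau (d k : ℕ) (r : ℝ) {τ : ℝ} (hτ : 0 < τ) :
    HasDerivAt (fun t => Bf d k r t) (((r^k)⁻¹ - 1) * ((-(d:ℝ)) * τ ^ (-(d:ℝ)-1))) τ := by
  have h := Real.hasDerivAt_rpow_const (x := τ) (p := -(d:ℝ)) (Or.inl (ne_of_gt hτ))
  exact ((h.const_mul _).const_add 1)

lemma hasDerivAt_H (d k : ℕ) (hk : 1 ≤ k) {r τ : ℝ} (hr : 0 < r) (hτ : 1 ≤ τ) :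
    HasDerivAt (fun t => t^2/2 * (Gf d k r t - 1))
      (Ff d k r τ - (((r^k)⁻¹ - 1) * d * ((1:ℝ)/k) / 2) *
        (τ ^ (1-(d:ℝ)) * (Bf d k r τ) ^ ((1:ℝ)/k - 1))) τ := by
  have hτ0 : (0:ℝ) < τ := lt_of_lt_of_le one_pos hτ
  have hB := HasDerivAt.rpow_const (p := (1:ℝ)/k) (hasDerivAt_Bf_tau d k r hτ0)
    (Or.inl (ne_of_gt (Bf_pos d k hr hτ)))
  have ht2 : HasDerivAt (fun t : ℝ => t^2/2) τ τ := by
    have := (hasDerivAt_pow 2 τ).div_const 2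
    simpa using this
  have key := ht2.mul (hB.sub_const 1)
  have hsp : τ ^ (1-(d:ℝ)) = τ^2 * τ ^ (-(d:ℝ)-1) := by
    rw [show (1-(d:ℝ)) = 2 + (-(d:ℝ)-1) by ring, Real.rpow_add hτ0, Real.rpow_two]
  refine key.congr_deriv ?_
  rw [Ff, Gf, hsp]; ring

lemma tendsto_H (d k : ℕ) (hd : 3 ≤ d) (hk : 1 ≤ k) {r : ℝ} (hr : 0 < r) :
    Filter.Tendsto (fun t : ℝ => t^2/2 * (Gf d k r t - 1)) Filter.atTop (nhds 0) := by
  have hD : (3:ℝ) ≤ d := by exact_mod_cast hd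
  apply squeeze_zero_norm' (a := fun τ => (|(r^k)⁻¹ - 1|/2) * τ ^ (2-(d:ℝ)))
  · filter_upwards [Filter.eventually_ge_atTop (1:ℝ)] with τ hτ
    have hτ0 : (0:ℝ) < τ := lt_of_lt_of_le one_pos hτ
    have h := Gf_sub_one_abs d k hk hr hτ
    have hsp : τ ^ (2-(d:ℝ)) = τ^2 * τ ^ (-(d:ℝ)) := by
      rw [show (2-(d:ℝ)) = 2 + (-(d:ℝ)) by ring, Real.rpow_add hτ0, Real.rpow_two]
    rw [norm_mul, Real.norm_eq_abs, Real.norm_eq_abs, abs_of_nonneg (by positivity :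
      (0:ℝ) ≤ τ^2/2), hsp]
    calc τ^2/2 * |Gf d k r τ - 1| ≤ τ^2/2 * (|(r^k)⁻¹ - 1| * τ ^ (-(d:ℝ))) := by
          exact mul_le_mul_of_nonneg_left h (by positivity)
      _ = |(r ^ k)⁻¹ - 1| / 2 * (τ ^ 2 * τ ^ (-(d:ℝ))) := by ring
  · have h0 : Filter.Tendsto (fun τ : ℝ => τ ^ (2-(d:ℝ))) Filter.atTop (nhds 0) := by
      have := tendsto_rpow_neg_atTop (y := (d:ℝ) - 2) (by linarith)
      convert this using 2 with τ
      ring_nf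
    have := h0.const_mul (|(r^k)⁻¹ - 1|/2)
    simpa using this

lemma If_eq (d k : ℕ) (hd : 3 ≤ d) (hk : 1 ≤ k) {r : ℝ} (hr : 0 < r) :
    If d k r = (1 - r⁻¹)/2 + (((r^k)⁻¹ - 1) * d * ((1:ℝ)/k) / 2) * Jf d k r := by
  set C := ((r^k)⁻¹ - 1) * (d:ℝ) * ((1:ℝ)/k) / 2 with hC
  have hq : (1:ℝ)/k - 1 ≤ 0 := by linarith [(p_mem k hk).2]
  have hJ : IntegrableOn (fun τ : ℝ => τ ^ (1-(d:ℝ)) * Bf d k r τ ^ ((1:ℝ)/k - 1)) (Ioi 1) :=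
    integrableOn_Jint d k hd hk hr _ hq
  have hFTC := integral_Ioi_of_hasDerivAt_of_tendsto'
    (f := fun t : ℝ => t^2/2 * (Gf d k r t - 1))
    (f' := fun τ => Ff d k r τ - C * (τ ^ (1-(d:ℝ)) * Bf d k r τ ^ ((1:ℝ)/k - 1)))
    (fun τ hτ => hasDerivAt_H d k hk hr hτ)
    ((integrableOn_Ff d k hd hk hr).sub (hJ.const_mul C))
    (tendsto_H d k hd hk hr)
  rw [MeasureTheory.integral_sub (integrableOn_Ff d k hd hk hr) (hJ.const_mul C),
    MeasureTheory.integral_const_mul] at hFTC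
  simp only [one_pow] at hFTC
  rw [Gf_at_one d k hk hr] at hFTC
  have : If d k r - C * Jf d k r = 0 - 1/2 * (r⁻¹ - 1) := hFTC
  have h2 : If d k r = C * Jf d k r - (r⁻¹ - 1)/2 := by linarith
  rw [h2]; ring

lemma Jf_nonneg (d k : ℕ) {r : ℝ} (hr : 0 < r) : 0 ≤ Jf d k r := by
  apply setIntegral_nonneg measurableSet_Ioi
  intro τ hτ
  have hτ0 : (0:ℝ) < τ := lt_trans one_pos hτ
  have := Bf_pos d k hr (le_of_lt hτ)
  positivity

lemma hasDerivAt_mu (d k : ℕ) (hd : 3 ≤ d) (hk : 1 ≤ k) {r : ℝ} (hr : 0 < r) :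
    HasDerivAt (fun x => x^2 * (-(1/2 : ℝ) + If d k x))
      (-1 + (2*r*(((r^k)⁻¹-1)*(d:ℝ)*((1:ℝ)/k)/2) + r^2 * cder k r * ((1:ℝ)/k)) * Jf d k r) r := by
  have h1 := ((hasDerivAt_If d k hd hk hr).const_add (-(1/2 : ℝ)))
  have h2 := (hasDerivAt_pow 2 r).mul h1
  refine h2.congr_deriv ?_
  rw [If_eq d k hd hk hr]
  have : r * r⁻¹ = 1 := mul_inv_cancel₀ (ne_of_gt hr)
  linear_combination -this

lemma coeff_nonpos (d k : ℕ) (hd : 3 ≤ d) (hk1 : 1 ≤ k) (hk2 : k ≤ d - 1) {r : ℝ}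
    (hr : 0 < r) (h2r : ((d:ℝ)-k)/d ≤ r^k) :
    2*r*(((r^k)⁻¹-1)*(d:ℝ)*((1:ℝ)/k)/2) + r^2 * cder k r * ((1:ℝ)/k) ≤ 0 := by
  have hX : (0:ℝ) < r^k := pow_pos hr k
  have hk0 : (0:ℝ) < k := by positivity
  have hD : (3:ℝ) ≤ (d:ℝ) := by exact_mod_cast hd
  have hD0 : (0:ℝ) < d := by linarith
  have key : (d:ℝ) - k ≤ d * r^k := by
    calc (d:ℝ)-k = d * (((d:ℝ)-k)/d) := by field_simp
      _ ≤ d * r^k := mul_le_mul_of_nonneg_left h2r hD0.le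
  have e1 : r ^ 2 * r ^ (k - 1) = r * r ^ k := by
    rw [← pow_add, ← pow_succ']; congr 1; omega
  have term2 : r^2 * cder k r * ((1:ℝ)/k) = -(r / r^k) := by
    rw [cder]
    field_simp
    rw [← pow_succ', Nat.sub_add_cancel hk1]
  have term1 : 2*r*(((r^k)⁻¹-1)*(d:ℝ)*((1:ℝ)/k)/2) = r*(d:ℝ)/k * ((r^k)⁻¹ - 1) := by ring
  rw [term1, term2]
  rw [← sub_nonneg]
  have expand2 : 0 - (r*(d:ℝ)/k * ((r^k)⁻¹ - 1) + -(r / r^k)) =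
      (r * ((k:ℝ) - (d:ℝ)*(1 - r^k))) / (k * r^k) := by
    field_simp
    ring
  rw [expand2]
  apply div_nonneg _ (by positivity)
  apply mul_nonneg hr.le
  nlinarith [key]

theorem stmt18 (d k : ℕ) (hd : 3 ≤ d) (hk1 : 1 ≤ k) (hk2 : k ≤ d - 1)
    (r2 : ℝ) (hr2 : r2 = (((d : ℝ) - k) / d) ^ ((1 : ℝ) / k))
    (μ : ℝ → ℝ)
    (hμ : ∀ r0 : ℝ, 0 < r0 →
      μ r0 = r0 ^ 2 * (-(1 / 2) +
        ∫ τ in Set.Ioi (1 : ℝ),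
          τ * ((1 + ((r0 ^ k)⁻¹ - 1) * τ ^ (-(d : ℝ))) ^ ((1 : ℝ) / k) - 1))) :
    StrictAntiOn μ (Set.Ioi r2) ∧
    Filter.Tendsto μ Filter.atTop Filter.atBot ∧
    (∀ r0, r2 < r0 → μ r0 < μ r2) ∧
    μ r2 = (((d : ℝ) - k) / d) ^ ((2 : ℝ) / k) *
      (-(1 / 2) + ∫ τ in Set.Ioi (1 : ℝ),
        τ * ((1 + ((k : ℝ) / ((d : ℝ) - k)) * τ ^ (-(d : ℝ))) ^ ((1 : ℝ) / k) - 1)) := by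
  have hD : (3:ℝ) ≤ (d:ℝ) := by exact_mod_cast hd
  have hkR : (1:ℝ) ≤ (k:ℝ) := by exact_mod_cast hk1
  have hkd : (k:ℝ) ≤ (d:ℝ) - 1 := by
    have : (k:ℝ) ≤ ((d-1 : ℕ) : ℝ) := by exact_mod_cast hk2
    rwa [Nat.cast_sub (by omega), Nat.cast_one] at this
  have hk0 : (0:ℝ) < k := by linarith
  have hdk : (1:ℝ) ≤ (d:ℝ) - k := by linarith
  have hbase : (0:ℝ) < ((d:ℝ) - k)/d := by positivity
  have hr2pos : 0 < r2 := by rw [hr2]; positivity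
  have hr2k : r2 ^ k = ((d:ℝ) - k)/d := by
    rw [hr2, ← Real.rpow_natCast ((((d:ℝ) - k)/d) ^ ((1:ℝ)/k)) k, ← Real.rpow_mul hbase.le,
      one_div, inv_mul_cancel₀ (ne_of_gt hk0), Real.rpow_one]
  have hμ' : ∀ r : ℝ, 0 < r → μ r = r^2 * (-(1/2 : ℝ) + If d k r) := by
    intro r hr
    rw [hμ r hr]; rfl
  -- derivative of μ at points r ≥ r2
  have hderiv : ∀ r : ℝ, 0 < r → HasDerivAt μ
      (-1 + (2*r*(((r^k)⁻¹-1)*(d:ℝ)*((1:ℝ)/k)/2) + r^2 * cder k r * ((1:ℝ)/k)) * Jf d k r) r := by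
    intro r hr
    apply (hasDerivAt_mu d k hd hk1 hr).congr_of_eventuallyEq
    filter_upwards [isOpen_Ioi.eventually_mem (show r ∈ Ioi (0:ℝ) from hr)] with x hx
    exact hμ' x hx
  have hderiv_neg : ∀ r : ℝ, r2 ≤ r → deriv μ r < 0 := by
    intro r hrr
    have hr : 0 < r := lt_of_lt_of_le hr2pos hrr
    rw [(hderiv r hr).deriv]
    have h2r : ((d:ℝ)-k)/d ≤ r^k := by
      rw [← hr2k]; exact pow_le_pow_left₀ hr2pos.le hrr k
    have hA := coeff_nonpos d k hd hk1 hk2 hr h2r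
    have hJ := Jf_nonneg d k hr
    nlinarith
  have hcontIci : ContinuousOn μ (Ici r2) := by
    intro r hrr
    exact ((hderiv r (lt_of_lt_of_le hr2pos hrr)).continuousAt).continuousWithinAt
  have hanti : StrictAntiOn μ (Ici r2) := by
    apply strictAntiOn_of_deriv_neg (convex_Ici r2) hcontIci
    intro r hrr
    rw [interior_Ici] at hrr
    exact hderiv_neg r (le_of_lt hrr)
  have part1 : StrictAntiOn μ (Ioi r2) := hanti.mono Ioi_subset_Ici_self
  have part3 : ∀ r0, r2 < r0 → μ r0 < μ r2 :=
    fun r0 h => hanti self_mem_Ici (le_of_lt h) h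
  have part2 : Filter.Tendsto μ Filter.atTop Filter.atBot := by
    apply Filter.tendsto_atBot_mono' Filter.atTop
      (show ∀ᶠ r in Filter.atTop, μ r ≤ -(r^2/2) from ?_) ?_
    · filter_upwards [Filter.eventually_ge_atTop (1:ℝ)] with r hr1
      have hr : (0:ℝ) < r := lt_of_lt_of_le one_pos hr1
      have hIle : If d k r ≤ 0 := by
        apply integral_nonpos_of_ae
        filter_upwards [ae_restrict_mem measurableSet_Ioi] with τ hτ
        have hτ1 : (1:ℝ) < τ := hτ
        have hτ0 : (0:ℝ) < τ := lt_trans one_pos hτ1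
        have hrk : (1:ℝ) ≤ r^k := one_le_pow₀ hr1
        have hc : (r^k)⁻¹ - 1 ≤ 0 := by
          have : (r^k)⁻¹ ≤ 1 := inv_le_one_of_one_le₀ hrk
          linarith
        have hB1 : Bf d k r τ ≤ 1 := by
          have hτd : (0:ℝ) < τ ^ (-(d:ℝ)) := Real.rpow_pos_of_pos hτ0 _
          have : ((r^k)⁻¹ - 1) * τ ^ (-(d:ℝ)) ≤ 0 := mul_nonpos_of_nonpos_of_nonneg hc hτd.le
          rw [Bf]; linarith
        have hG1 : Gf d k r τ ≤ 1 :=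
          Real.rpow_le_one (Bf_pos d k hr (le_of_lt hτ1)).le hB1 (p_mem k hk1).1.le
        have : Ff d k r τ ≤ 0 :=
          mul_nonpos_of_nonneg_of_nonpos hτ0.le (by linarith)
        exact this
      rw [hμ' r hr]
      nlinarith
    · have h1 : Filter.Tendsto (fun r : ℝ => r^2/2) Filter.atTop Filter.atTop :=
        (Filter.tendsto_pow_atTop two_ne_zero).atTop_div_const (by norm_num)
      exact (Filter.tendsto_neg_atTop_atBot).comp h1
  have part4 : μ r2 = (((d : ℝ) - k) / d) ^ ((2 : ℝ) / k) *
      (-(1 / 2) + ∫ τ in Set.Ioi (1 : ℝ),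
        τ * ((1 + ((k : ℝ) / ((d : ℝ) - k)) * τ ^ (-(d : ℝ))) ^ ((1 : ℝ) / k) - 1)) := by
    have hc2 : (r2^k)⁻¹ - 1 = (k:ℝ)/((d:ℝ) - k) := by
      rw [hr2k]
      field_simp
      ring
    have hsq : r2^2 = (((d : ℝ) - k) / d) ^ ((2 : ℝ) / k) := by
      rw [hr2, ← Real.rpow_natCast ((((d:ℝ) - k)/d) ^ ((1:ℝ)/k)) 2, ← Real.rpow_mul hbase.le]
      norm_num
      rw [show ((k:ℝ))⁻¹ * 2 = 2/k by ring]
    rw [hμ r2 hr2pos, hc2, hsq]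
  exact ⟨part1, part2, part3, part4⟩
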